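/- arXiv:1407.5807 — 4 statements merged into one kernel-verified Lean document; each statement's English description precedes it below -/
import Mathlib

section
/- Let m be a positive integer, let K̄ be a real symmetric positive semidefinite m×m matrix whose diagonal entries all equal λ > 0, let σ² > 0, and let 0 ≤ α ≤ λ. If k ∈ ℝᵐ is a vector all of whose entries satisfy k_h ≥ λ − α, then λ − kᵀ(K̄ + σ²·I)⁻¹ k ≤ λ − m(λ − α)²/(mλ + σ²). -/
open Matrix


lemma my_sym {n : ℕ} {A : Matrix (Fin n) (Fin n) ℝ} (hA : A.IsHermitian)
    (x z : Fin n → ℝ) : z ⬝ᵥ A *ᵥ x = x ⬝ᵥ A *ᵥ z := by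
  rw [dotProduct_mulVec, ← mulVec_transpose]
  have : Aᵀ = A := by simpa using hA.eq
  rw [this, dotProduct_comm, dotProduct_mulVec, ← mulVec_transpose, this]

lemma my_cs {n : ℕ} (A : Matrix (Fin n) (Fin n) ℝ) (hA : A.PosDef)
    (x y : Fin n → ℝ) :
    (x ⬝ᵥ y) ^ 2 ≤ (x ⬝ᵥ A *ᵥ x) * (y ⬝ᵥ A⁻¹ *ᵥ y) := by
  set z := A⁻¹ *ᵥ y with hz
  have hAz : A *ᵥ z = y := by
    rw [hz, mulVec_mulVec, Matrix.mul_nonsing_inv _ (isUnit_iff_ne_zero.mpr hA.det_pos.ne'), one_mulVec]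
  have hy : y ⬝ᵥ A⁻¹ *ᵥ y = z ⬝ᵥ A *ᵥ z := by
    rw [← hz, ← hAz]; exact dotProduct_comm _ _
  have hxy : x ⬝ᵥ y = x ⬝ᵥ A *ᵥ z := by rw [← hAz]
  rw [hy, hxy]
  have key : ∀ t : ℝ, 0 ≤ (z ⬝ᵥ A *ᵥ z) * (t * t) + (2 * (x ⬝ᵥ A *ᵥ z)) * t + x ⬝ᵥ A *ᵥ x := by
    intro t
    have h := hA.posSemidef.dotProduct_mulVec_nonneg (x + t • z)
    simp only [RCLike.star_def, map_nonneg, star_trivial] at h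
    have hsym := my_sym hA.isHermitian x z
    simp only [mulVec_add, mulVec_smul, dotProduct_add, add_dotProduct, dotProduct_smul,
      smul_dotProduct, smul_eq_mul] at h
    rw [hsym] at h; nlinarith [h]
  have hd := discrim_le_zero key
  rw [discrim] at hd
  nlinarith [hd]

lemma my_entry {n : ℕ} (A : Matrix (Fin n) (Fin n) ℝ) (i j : Fin n) :
    (Pi.single i 1 : Fin n → ℝ) ⬝ᵥ A *ᵥ (Pi.single j 1) = A i j := by
  simp [dotProduct, mulVec, Pi.single_apply, Finset.sum_ite_eq', Finset.mul_sum]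

/-- For a real symmetric positive semidefinite `m × m` matrix `K̄` with constant
diagonal `λ > 0`, noise `σ² > 0`, `0 ≤ α ≤ λ`, and a vector `k` with all entries `≥ λ - α`,
the posterior variance satisfies
`λ - kᵀ(K̄ + σ²·I)⁻¹ k ≤ λ - m(λ - α)² / (mλ + σ²)`. -/
theorem stmt_1 (m : ℕ) (hm : 0 < m) (lam : ℝ) (hlam : 0 < lam)
    (Kbar : Matrix (Fin m) (Fin m) ℝ) (hK : Kbar.PosSemidef)
    (hdiag : ∀ i, Kbar i i = lam)
    (σ2 : ℝ) (hσ2 : 0 < σ2)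
    (α : ℝ) (hα0 : 0 ≤ α) (hαlam : α ≤ lam)
    (k : Fin m → ℝ) (hk : ∀ h, lam - α ≤ k h) :
    lam - k ⬝ᵥ ((Kbar + σ2 • (1 : Matrix (Fin m) (Fin m) ℝ))⁻¹ *ᵥ k) ≤
      lam - (m : ℝ) * (lam - α) ^ 2 / ((m : ℝ) * lam + σ2) := by
  set A := Kbar + σ2 • (1 : Matrix (Fin m) (Fin m) ℝ) with hA
  have hone : (σ2 • (1 : Matrix (Fin m) (Fin m) ℝ)).PosDef := by
    rw [smul_one_eq_diagonal]
    exact posDef_diagonal_iff.mpr fun _ => hσ2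
  have hApd : A.PosDef := Matrix.PosDef.posSemidef_add hK hone
  -- entry bound on Kbar
  have hentry : ∀ i j, Kbar i j ≤ lam := by
    intro i j
    by_cases hij : i = j
    · simp [hij, hdiag j]
    · have h := hK.dotProduct_mulVec_nonneg ((Pi.single i 1 : Fin m → ℝ) - Pi.single j 1)
      simp only [RCLike.star_def, map_nonneg, star_trivial] at h
      rw [mulVec_sub, dotProduct_sub, sub_dotProduct, sub_dotProduct] at h
      rw [my_entry, my_entry, my_entry, my_entry, hdiag i, hdiag j] at h
      have hsym : Kbar j i = Kbar i j := by
        have := hK.isHermitian.apply j i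
        simpa using this.symm
      linarith
  -- ones vector
  set x : Fin m → ℝ := fun _ => 1 with hx
  have hq : x ⬝ᵥ A *ᵥ x ≤ (m : ℝ) * ((m : ℝ) * lam + σ2) := by
    have : x ⬝ᵥ A *ᵥ x = (∑ i, ∑ j, Kbar i j) + σ2 * m := by
      simp [hA, hx, dotProduct, mulVec, Matrix.add_apply, Matrix.smul_apply, one_apply,
        Finset.sum_add_distrib, Finset.sum_ite_eq, mul_comm]
    rw [this]
    have hsum : (∑ i, ∑ j, Kbar i j) ≤ (m : ℝ) * ((m : ℝ) * lam) := by
      calc (∑ i : Fin m, ∑ j : Fin m, Kbar i j) ≤ ∑ i : Fin m, ∑ j : Fin m, lam := by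
            apply Finset.sum_le_sum; intro i _; exact Finset.sum_le_sum fun j _ => hentry i j
        _ = (m : ℝ) * ((m : ℝ) * lam) := by simp [mul_assoc]
    nlinarith
  have hs : (m : ℝ) * (lam - α) ≤ x ⬝ᵥ k := by
    have : x ⬝ᵥ k = ∑ i, k i := by simp [dotProduct, hx]
    rw [this]
    calc (m : ℝ) * (lam - α) = ∑ _i : Fin m, (lam - α) := by simp [mul_comm]; ring
      _ ≤ ∑ i, k i := Finset.sum_le_sum fun i _ => hk i
  have hc0 : 0 ≤ k ⬝ᵥ A⁻¹ *ᵥ k := by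
    have := hApd.inv.posSemidef.dotProduct_mulVec_nonneg k
    simpa using this
  have hcs := my_cs A hApd x k
  have hsn : 0 ≤ (m : ℝ) * (lam - α) := by
    have : (0:ℝ) ≤ m := Nat.cast_nonneg m
    nlinarith
  have hD : (0:ℝ) < (m : ℝ) * lam + σ2 := by
    have : (0:ℝ) ≤ m := Nat.cast_nonneg m
    nlinarith
  have hm' : (0:ℝ) < m := by exact_mod_cast hm
  apply sub_le_sub_left
  rw [div_le_iff₀ hD]
  have h1 : ((m : ℝ) * (lam - α)) ^ 2 ≤ (x ⬝ᵥ k) ^ 2 := by nlinarith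
  nlinarith [hcs, hc0, hq, mul_le_mul_of_nonneg_right hq hc0]
end

section
/- Let (Ω, F, P) be a probability space with filtration (F_k)_{k≥0}, let (X_k)_{k≥1} be a sequence of random variables with values in a measurable space S such that X_k is F_k-measurable, and let D ⊆ S be measurable. Suppose there exists c ∈ (0,1] such that for every k ≥ 0, P(X_{k+1} ∈ D | F_k) ≥ c almost surely. Then for every m ∈ ℕ and every δ ∈ (0,1) there exists t₀ ∈ ℕ such that for all t ≥ t₀, the probability that at least m of the variables X_1, …, X_t lie in D is at least 1 − δ. -/
open MeasureTheory Filter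

/-- Core estimate: the probability that all of `X_{a+1}, …, X_{a+L}` miss `D`
is at most `(1-c)^L`. -/
lemma block_fail_bound {Ω S : Type*} [mΩ : MeasurableSpace Ω] [MeasurableSpace S]
    (P : Measure Ω) [IsProbabilityMeasure P]
    (ℱ : Filtration ℕ mΩ) (X : ℕ → Ω → S)
    (hX : ∀ k, 1 ≤ k → Measurable[ℱ k] (X k))
    (D : Set S) (hD : MeasurableSet D)
    (c : ℝ) (hc0 : 0 < c) (hc1 : c ≤ 1)
    (hcond : ∀ k : ℕ, ∀ᵐ ω ∂P,
      c ≤ (P[(X (k + 1) ⁻¹' D).indicator (fun _ => (1 : ℝ)) | ℱ k]) ω)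
    (a : ℕ) :
    ∀ L : ℕ, P {ω | ∀ k ∈ Finset.Icc (a+1) (a+L), X k ω ∉ D}
      ≤ ENNReal.ofReal ((1-c)^L) := by
  have h1c : (0:ℝ) ≤ 1 - c := by linarith
  -- measurability of the failure sets
  have hAmeas : ∀ L : ℕ, MeasurableSet[ℱ (a+L)]
      {ω | ∀ k ∈ Finset.Icc (a+1) (a+L), X k ω ∉ D} := by
    intro L
    have : {ω | ∀ k ∈ Finset.Icc (a+1) (a+L), X k ω ∉ D}
        = ⋂ k ∈ (Finset.Icc (a+1) (a+L) : Finset ℕ), (X k ⁻¹' D)ᶜ := by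
      ext ω; simp [Set.mem_iInter]
    rw [this]
    refine MeasurableSet.biInter (Set.to_countable _) (fun k hk => ?_)
    have hk' := Finset.mem_Icc.mp hk
    have h1 : MeasurableSet[ℱ k] (X k ⁻¹' D) := hX k (by omega) hD
    exact ℱ.mono (show k ≤ a + L by omega) _ h1.compl
  intro L
  induction L with
  | zero =>
    simp
  | succ L ih =>
    set A : Set Ω := {ω | ∀ k ∈ Finset.Icc (a+1) (a+L), X k ω ∉ D} with hAdef
    set B : Set Ω := X (a+L+1) ⁻¹' D with hBdef
    have hA : MeasurableSet[ℱ (a+L)] A := hAmeas L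
    have hA' : MeasurableSet A := ℱ.le _ _ hA
    have hB : MeasurableSet B := ℱ.le _ _ (hX (a+L+1) (by omega) hD)
    have hset : {ω | ∀ k ∈ Finset.Icc (a+1) (a+(L+1)), X k ω ∉ D} = A \ B := by
      ext ω
      simp only [hAdef, hBdef, Set.mem_setOf_eq, Set.mem_diff, Set.mem_preimage,
        Finset.mem_Icc]
      constructor
      · intro h
        refine ⟨fun k hk => h k ⟨hk.1, by omega⟩, h (a+L+1) ⟨by omega, by omega⟩⟩
      · intro h k hk
        rcases Nat.lt_or_ge k (a+L+1) with h' | h'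
        · exact h.1 k ⟨hk.1, by omega⟩
        · have : k = a+L+1 := by omega
          rw [this]; exact h.2
    rw [hset]
    -- real-valued quantities
    set g : Ω → ℝ := B.indicator (fun _ => (1:ℝ)) with hgdef
    have hg_int : Integrable g P := (integrable_const (1:ℝ)).indicator hB
    have hce := setIntegral_condExp (ℱ.le (a+L)) hg_int hA
    -- ∫_A g = P (B ∩ A)
    have hIg : ∫ x in A, g x ∂P = (P (B ∩ A)).toReal := by
      rw [hgdef]
      have h := integral_indicator_one (μ := P.restrict A) hB
      rw [measureReal_def, Measure.restrict_apply hB] at h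
      exact h
    -- lower bound on ∫_A condexp
    have hlow : c * (P A).toReal ≤ ∫ x in A, (P[g | ℱ (a+L)]) x ∂P := by
      have hmono : ∫ x in A, c ∂P ≤ ∫ x in A, (P[g | ℱ (a+L)]) x ∂P := by
        refine setIntegral_mono_ae (integrableOn_const (measure_ne_top _ _))
          integrable_condExp.integrableOn ?_
        exact hcond (a+L)
      rwa [setIntegral_const, smul_eq_mul, mul_comm, measureReal_def] at hmono
    have hq : c * (P A).toReal ≤ (P (A ∩ B)).toReal := by
      rw [Set.inter_comm]
      calc c * (P A).toReal ≤ ∫ x in A, (P[g | ℱ (a+L)]) x ∂P := hlow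
        _ = ∫ x in A, g x ∂P := hce
        _ = (P (B ∩ A)).toReal := hIg
    have hsplit : P (A ∩ B) + P (A \ B) = P A := measure_inter_add_diff A hB
    have hsplit' : (P (A ∩ B)).toReal + (P (A \ B)).toReal = (P A).toReal := by
      rw [← ENNReal.toReal_add (measure_ne_top _ _) (measure_ne_top _ _), hsplit]
    have hPA : (P A).toReal ≤ (1-c)^L := by
      refine ENNReal.toReal_le_of_le_ofReal (pow_nonneg h1c L) ?_
      exact ih
    have hr : (P (A \ B)).toReal ≤ (1-c)^(L+1) := by
      have h0 : (0:ℝ) ≤ (P A).toReal := ENNReal.toReal_nonneg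
      rw [pow_succ]
      nlinarith [hq, hsplit', hPA]
    calc P (A \ B) = ENNReal.ofReal ((P (A \ B)).toReal) :=
          (ENNReal.ofReal_toReal (measure_ne_top _ _)).symm
      _ ≤ ENNReal.ofReal ((1-c)^(L+1)) := ENNReal.ofReal_le_ofReal hr

/-- If an adapted process `(X_k)` satisfies `P(X_{k+1} ∈ D | F_k) ≥ c` almost
surely for every `k`, with `c ∈ (0,1]`, then for every `m ∈ ℕ` and every `δ ∈ (0,1)` there
exists `t₀` such that for all `t ≥ t₀`, with probability at least `1 - δ` at least `m` of the
variables `X_1, …, X_t` lie in `D`. -/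
theorem stmt_4 {Ω S : Type*} [mΩ : MeasurableSpace Ω] [MeasurableSpace S]
    (P : Measure Ω) [IsProbabilityMeasure P]
    (ℱ : Filtration ℕ mΩ) (X : ℕ → Ω → S)
    (hX : ∀ k, 1 ≤ k → Measurable[ℱ k] (X k))
    (D : Set S) (hD : MeasurableSet D)
    (c : ℝ) (hc0 : 0 < c) (hc1 : c ≤ 1)
    (hcond : ∀ k : ℕ, ∀ᵐ ω ∂P,
      c ≤ (P[(X (k + 1) ⁻¹' D).indicator (fun _ => (1 : ℝ)) | ℱ k]) ω) :
    ∀ (m : ℕ) (δ : ℝ), 0 < δ → δ < 1 →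
      ∃ t₀ : ℕ, ∀ t ≥ t₀,
        1 - ENNReal.ofReal δ ≤
          P {ω | m ≤ ∑ k ∈ Finset.Icc 1 t, D.indicator (fun _ => (1 : ℕ)) (X k ω)} := by
  classical
  intro m δ hδ0 hδ1
  have h1c : (0:ℝ) ≤ 1 - c := by linarith
  -- choose a block length L with m * (1-c)^L ≤ δ
  have habs : |1 - c| < 1 := by rw [abs_of_nonneg h1c]; linarith
  have htend : Tendsto (fun n : ℕ => (1-c)^n) atTop (nhds 0) :=
    tendsto_pow_atTop_nhds_zero_of_abs_lt_one habs
  have hm1 : (0:ℝ) < (m:ℝ) + 1 := by positivity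
  obtain ⟨L, hL⟩ := (htend.eventually (gt_mem_nhds (show (0:ℝ) < δ / ((m:ℝ)+1) by positivity))).exists
  have hLδ : (m:ℝ) * (1-c)^L ≤ δ := by
    have h2 : (1-c)^L * ((m:ℝ)+1) < δ := (lt_div_iff₀ hm1).mp hL
    nlinarith [pow_nonneg h1c L]
  refine ⟨m * L, fun t ht => ?_⟩
  -- the counting function
  set Nf : Ω → ℕ := fun ω => ∑ k ∈ Finset.Icc 1 t, D.indicator (fun _ => (1:ℕ)) (X k ω)
    with hNf
  have hNmeas : Measurable Nf := by
    refine Finset.measurable_sum _ (fun k hk => ?_)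
    have hk1 : 1 ≤ k := (Finset.mem_Icc.mp hk).1
    have : (fun ω => D.indicator (fun _ => (1:ℕ)) (X k ω))
        = (X k ⁻¹' D).indicator (fun _ => (1:ℕ)) := by
      ext ω; by_cases h : X k ω ∈ D <;> simp [Set.indicator_apply, h]
    rw [this]
    exact Measurable.indicator measurable_const (ℱ.le k _ (hX k hk1 hD))
  set s : Set Ω := {ω | m ≤ Nf ω} with hsdef
  have hs : MeasurableSet s := measurableSet_le measurable_const hNmeas
  -- union bound on the complement
  have hsub : sᶜ ⊆ ⋃ i ∈ Finset.range m,
      {ω | ∀ k ∈ Finset.Icc (i*L+1) (i*L+L), X k ω ∉ D} := by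
    intro ω hω
    by_contra hnot
    simp only [Set.mem_iUnion, Set.mem_setOf_eq, not_exists] at hnot
    push_neg at hnot
    have hclaim : ∀ i ∈ Finset.range m, ∃ k,
        k ∈ Finset.Icc (i*L+1) (i*L+L) ∧ X k ω ∈ D := by
      intro i hi
      rcases hnot i hi with ⟨k, hk, hkD⟩
      exact ⟨k, hk, hkD⟩
    choose! f hf using hclaim
    have hsum : Nf ω = ((Finset.Icc 1 t).filter (fun k => X k ω ∈ D)).card := by
      rw [hNf, Finset.card_filter]
      refine Finset.sum_congr rfl (fun k _ => ?_)
      by_cases h : X k ω ∈ D <;> simp [Set.indicator_apply, h]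
    have hcard : m ≤ ((Finset.Icc 1 t).filter (fun k => X k ω ∈ D)).card := by
      have hmaps : ∀ i ∈ Finset.range m,
          f i ∈ (Finset.Icc 1 t).filter (fun k => X k ω ∈ D) := by
        intro i hi
        obtain ⟨hmem, hD'⟩ := hf i hi
        obtain ⟨hlo, hhi⟩ := Finset.mem_Icc.mp hmem
        have him : i + 1 ≤ m := Finset.mem_range.mp hi
        have h1 : (i+1)*L ≤ m*L := Nat.mul_le_mul_right L him
        have h2 : i*L + L = (i+1)*L := by ring
        refine Finset.mem_filter.mpr ⟨Finset.mem_Icc.mpr ⟨by omega, by omega⟩, hD'⟩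
      have hinj : Set.InjOn f (Finset.range m) := by
        intro i hi j hj hij
        obtain ⟨hmi, _⟩ := hf i (Finset.mem_coe.mp hi)
        obtain ⟨hmj, _⟩ := hf j (Finset.mem_coe.mp hj)
        obtain ⟨hlo_i, hhi_i⟩ := Finset.mem_Icc.mp hmi
        obtain ⟨hlo_j, hhi_j⟩ := Finset.mem_Icc.mp hmj
        rcases lt_trichotomy i j with h | h | h
        · exfalso
          have h1 : (i+1)*L ≤ j*L := Nat.mul_le_mul_right L (by omega)
          have h2 : i*L + L = (i+1)*L := by ring
          have : f i < f j := by omega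
          omega
        · exact h
        · exfalso
          have h1 : (j+1)*L ≤ i*L := Nat.mul_le_mul_right L (by omega)
          have h2 : j*L + L = (j+1)*L := by ring
          have : f j < f i := by omega
          omega
      calc m = (Finset.range m).card := (Finset.card_range m).symm
        _ ≤ _ := Finset.card_le_card_of_injOn f hmaps hinj
    have : m ≤ Nf ω := by rw [hsum]; exact hcard
    exact hω this
  have hcompl : P sᶜ ≤ ENNReal.ofReal δ := by
    calc P sᶜ ≤ P (⋃ i ∈ Finset.range m,
        {ω | ∀ k ∈ Finset.Icc (i*L+1) (i*L+L), X k ω ∉ D}) := measure_mono hsub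
      _ ≤ ∑ i ∈ Finset.range m,
          P {ω | ∀ k ∈ Finset.Icc (i*L+1) (i*L+L), X k ω ∉ D} :=
        measure_biUnion_finset_le _ _
      _ ≤ ∑ _i ∈ Finset.range m, ENNReal.ofReal ((1-c)^L) := by
        refine Finset.sum_le_sum (fun i _ => ?_)
        exact block_fail_bound P ℱ X hX D hD c hc0 hc1 hcond (i*L) L
      _ = (m : ENNReal) * ENNReal.ofReal ((1-c)^L) := by
        rw [Finset.sum_const, Finset.card_range, nsmul_eq_mul]
      _ = ENNReal.ofReal ((m:ℝ) * (1-c)^L) := by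
        rw [ENNReal.ofReal_mul (by positivity), ENNReal.ofReal_natCast]
      _ ≤ ENNReal.ofReal δ := ENNReal.ofReal_le_ofReal hLδ
  rw [tsub_le_iff_right]
  calc (1:ENNReal) = P Set.univ := (measure_univ (μ := P)).symm
    _ = P s + P sᶜ := by
      rw [← measure_add_measure_compl hs]
    _ ≤ P s + ENNReal.ofReal δ := add_le_add_right hcompl _
end

section
/- Let X ⊂ ℝ² be compact and convex with nonempty interior, and let K : X × X → ℝ be a continuous, symmetric, positive semidefinite kernel (every Gram matrix built from K is positive semidefinite) with K(x,x) = λ > 0 for all x ∈ X. Let (Ω, F, P) be a probability space with filtration (F_k)_{k≥0} and let (x_k)_{k≥1} be an X-valued adapted process such that there exists ε̄ > 0 with P(x_{k+1} ∈ A | F_k) ≥ ε̄·vol(A) almost surely for every Borel set A ⊆ X, where vol is the Lebesgue measure on ℝ². Fix σ² > 0 and for t ∈ ℕ and x ∈ X define the posterior variance V_t(x) = λ − k_t(x)ᵀ(K̄_t + σ²·I_t)⁻¹ k_t(x), where (K̄_t)_{ij} = K(x_i, x_j) for 1 ≤ i,j ≤ t and (k_t(x))_i = K(x_i, x). Then for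 every ε > 0 and every δ ∈ (0,1] there exists t₀ such that for all t ≥ t₀, P( sup_{x ∈ X} V_t(x) ≤ ε ) ≥ 1 − δ. -/
open MeasureTheory Filter Matrix Metric

/-- The plane `ℝ²`. -/
abbrev E2 : Type := EuclideanSpace ℝ (Fin 2)


lemma quad_lower {t : ℕ} {M : Matrix (Fin t) (Fin t) ℝ} (hM : M.PosDef) (hsymm : Mᵀ = M)
    (k a : Fin t → ℝ) :
    2 * (a ⬝ᵥ k) - a ⬝ᵥ (M *ᵥ a) ≤ k ⬝ᵥ (M⁻¹ *ᵥ k) := by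
  have hunit : IsUnit M.det := hM.det_pos.ne'.isUnit
  set w : Fin t → ℝ := M⁻¹ *ᵥ k with hw
  have hMw : M *ᵥ w = k := by
    rw [hw, Matrix.mulVec_mulVec, Matrix.mul_nonsing_inv M hunit, Matrix.one_mulVec]
  have hpos : 0 ≤ (a - w) ⬝ᵥ (M *ᵥ (a - w)) := by
    rcases eq_or_ne (a - w) 0 with h | h
    · simp [h]
    · have := hM.dotProduct_mulVec_pos h
      simpa using this.le
  have hexp : (a - w) ⬝ᵥ (M *ᵥ (a - w))
      = a ⬝ᵥ (M *ᵥ a) - a ⬝ᵥ k - k ⬝ᵥ a + k ⬝ᵥ w := by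
    have h1 : w ⬝ᵥ (M *ᵥ a) = k ⬝ᵥ a := by
      rw [Matrix.dotProduct_mulVec, ← Matrix.mulVec_transpose, hsymm, hMw]
    have h2 : a ⬝ᵥ (M *ᵥ w) = a ⬝ᵥ k := by rw [hMw]
    have h3 : w ⬝ᵥ (M *ᵥ w) = k ⬝ᵥ w := by
      rw [Matrix.dotProduct_mulVec, ← Matrix.mulVec_transpose, hsymm, hMw]
    rw [Matrix.mulVec_sub, dotProduct_sub, sub_dotProduct, sub_dotProduct,
      h1, h2, h3]
    ring
  have hak : a ⬝ᵥ k = k ⬝ᵥ a := dotProduct_comm a k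
  rw [hexp] at hpos
  linarith

lemma sum_pick {t m : ℕ} (g : Fin m → Fin t) (f : Fin t → ℝ) (c : ℝ) :
    ∑ i, (∑ b, if g b = i then c else 0) * f i = c * ∑ b, f (g b) := by
  simp_rw [Finset.sum_mul, ite_mul, zero_mul]
  rw [Finset.sum_comm, Finset.mul_sum]
  congr 1
  ext b
  simp [Finset.sum_ite_eq]

lemma Mpos {t : ℕ} (G : Matrix (Fin t) (Fin t) ℝ) (hGsymm : Gᵀ = G)
    (hG : ∀ a : Fin t → ℝ, 0 ≤ a ⬝ᵥ (G *ᵥ a)) {σ2 : ℝ} (hσ2 : 0 < σ2) :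
    (G + σ2 • (1 : Matrix (Fin t) (Fin t) ℝ)).PosDef := by
  refine Matrix.PosDef.of_dotProduct_mulVec_pos ?_ ?_
  · show (G + σ2 • 1)ᴴ = _
    rw [conjTranspose_eq_transpose_of_trivial, transpose_add, hGsymm, transpose_smul,
      transpose_one]
  · intro v hv
    have h1 : v ⬝ᵥ ((G + σ2 • 1) *ᵥ v) = v ⬝ᵥ (G *ᵥ v) + σ2 * (v ⬝ᵥ v) := by
      rw [Matrix.add_mulVec, dotProduct_add, Matrix.smul_mulVec,
        Matrix.one_mulVec, dotProduct_smul]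
      simp [smul_eq_mul]
    have h2 : 0 < v ⬝ᵥ v := by
      obtain ⟨i, hi⟩ := Function.ne_iff.mp hv
      exact Finset.sum_pos' (fun j _ => mul_self_nonneg (v j))
        ⟨i, Finset.mem_univ i, mul_self_pos.mpr hi⟩
    have h3 := hG v
    show 0 < star v ⬝ᵥ _
    rw [star_trivial, h1]
    nlinarith
lemma var_bound {t m : ℕ} (hm : 0 < m) (y : Fin t → E2) (q : E2)
    (K : E2 → E2 → ℝ) (lam σ2 η : ℝ) (hσ2 : 0 < σ2) (hη : 0 ≤ η)
    (hGsymm : (Matrix.of fun i j : Fin t => K (y i) (y j))ᵀ = Matrix.of fun i j => K (y i) (y j))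
    (hGquad : ∀ a : Fin t → ℝ,
      0 ≤ a ⬝ᵥ ((Matrix.of fun i j : Fin t => K (y i) (y j)) *ᵥ a))
    (g : Fin m → Fin t) (hginj : Function.Injective g)
    (hnear : ∀ b b' : Fin m, K (y (g b)) (y (g b')) ≤ lam + η)
    (hnearq : ∀ b : Fin m, lam - η ≤ K (y (g b)) q) :
    lam - (fun i : Fin t => K (y i) q) ⬝ᵥ
        (((Matrix.of fun i j : Fin t => K (y i) (y j)) +
            σ2 • (1 : Matrix (Fin t) (Fin t) ℝ))⁻¹ *ᵥ fun i : Fin t => K (y i) q)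
      ≤ 3 * η + σ2 / m := by
  set G : Matrix (Fin t) (Fin t) ℝ := Matrix.of fun i j : Fin t => K (y i) (y j) with hG
  set M : Matrix (Fin t) (Fin t) ℝ := G + σ2 • 1 with hM
  have hMpd : M.PosDef := Mpos G hGsymm hGquad hσ2
  have hMsymm : Mᵀ = M := by
    rw [hM, transpose_add, hGsymm, transpose_smul, transpose_one]
  set k : Fin t → ℝ := fun i => K (y i) q with hk
  set a : Fin t → ℝ := fun i => ∑ b, if g b = i then (1 / m : ℝ) else 0 with ha
  have hmR : (0:ℝ) < m := by exact_mod_cast hm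
  -- a ⬝ᵥ k ≥ lam - η
  have hak : lam - η ≤ a ⬝ᵥ k := by
    have : a ⬝ᵥ k = (1/m) * ∑ b, k (g b) := sum_pick g k (1/m)
    rw [this]
    have hsum : (m : ℝ) * (lam - η) ≤ ∑ b, k (g b) := by
      calc (m:ℝ) * (lam - η) = ∑ _b : Fin m, (lam - η) := by
            rw [Finset.sum_const]; simp [mul_comm]
        _ ≤ ∑ b, k (g b) := Finset.sum_le_sum fun b _ => hnearq b
    calc lam - η = (1/m) * ((m:ℝ) * (lam - η)) := by field_simp
      _ ≤ (1/m) * ∑ b, k (g b) := by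
          apply mul_le_mul_of_nonneg_left hsum (by positivity)
  -- a ⬝ᵥ (G *ᵥ a) ≤ lam + η
  have haGa : a ⬝ᵥ (G *ᵥ a) ≤ lam + η := by
    have h1 : a ⬝ᵥ (G *ᵥ a) = (1/m) * ∑ b, (G *ᵥ a) (g b) := sum_pick g (G *ᵥ a) (1/m)
    have h2 : ∀ b : Fin m, (G *ᵥ a) (g b) = (1/m) * ∑ b', K (y (g b)) (y (g b')) := by
      intro b
      have : (G *ᵥ a) (g b) = ∑ j, a j * K (y (g b)) (y j) := by
        simp [Matrix.mulVec, dotProduct, hG, mul_comm]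
      rw [this]
      exact sum_pick g (fun j => K (y (g b)) (y j)) (1/m)
    rw [h1]
    have h3 : ∀ b : Fin m, (G *ᵥ a) (g b) ≤ (1/m) * ((m:ℝ) * (lam + η)) := by
      intro b
      rw [h2 b]
      apply mul_le_mul_of_nonneg_left _ (by positivity)
      calc ∑ b', K (y (g b)) (y (g b')) ≤ ∑ _b' : Fin m, (lam + η) :=
            Finset.sum_le_sum fun b' _ => hnear b b'
        _ = (m:ℝ) * (lam + η) := by rw [Finset.sum_const]; simp [mul_comm]; ring
    calc (1/m) * ∑ b, (G *ᵥ a) (g b)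
        ≤ (1/m) * ∑ _b : Fin m, (1/m) * ((m:ℝ) * (lam + η)) := by
          apply mul_le_mul_of_nonneg_left (Finset.sum_le_sum fun b _ => h3 b) (by positivity)
      _ = lam + η := by rw [Finset.sum_const, Finset.card_univ, Fintype.card_fin]; field_simp; ring
  -- a ⬝ᵥ a = 1/m
  have haa : a ⬝ᵥ a = 1/m := by
    have h1 : a ⬝ᵥ a = (1/m) * ∑ b, a (g b) := sum_pick g a (1/m)
    have h2 : ∀ b : Fin m, a (g b) = 1/m := by
      intro b
      simp only [ha]
      rw [Finset.sum_eq_single b]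
      · simp
      · intro b' _ hb'; exact if_neg fun h => hb' (hginj h)
      · intro h; exact absurd (Finset.mem_univ b) h
    rw [h1]
    simp only [h2]
    rw [Finset.sum_const, Finset.card_univ, Fintype.card_fin, nsmul_eq_mul]
    field_simp
  -- a ⬝ᵥ (M *ᵥ a)
  have haMa : a ⬝ᵥ (M *ᵥ a) ≤ lam + η + σ2 / m := by
    have : a ⬝ᵥ (M *ᵥ a) = a ⬝ᵥ (G *ᵥ a) + σ2 * (a ⬝ᵥ a) := by
      rw [hM, Matrix.add_mulVec, dotProduct_add, Matrix.smul_mulVec,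
        Matrix.one_mulVec, dotProduct_smul]
      simp [smul_eq_mul]
    rw [this, haa]
    have : σ2 * (1/m) = σ2 / m := by ring
    linarith [this]
  have hmain := quad_lower hMpd hMsymm k a
  have : 2 * (lam - η) - (lam + η + σ2/m) ≤ k ⬝ᵥ (M⁻¹ *ᵥ k) := by
    calc 2 * (lam - η) - (lam + η + σ2/m) ≤ 2 * (a ⬝ᵥ k) - a ⬝ᵥ (M *ᵥ a) := by linarith
      _ ≤ k ⬝ᵥ (M⁻¹ *ᵥ k) := hmain
  linarith

lemma vol_pos {D : Set E2} (hDconv : Convex ℝ D) {z : E2} (hz : z ∈ interior D)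
    {c : E2} (hc : c ∈ D) {ρ : ℝ} (hρ : 0 < ρ) :
    0 < volume (closedBall c ρ ∩ D) := by
  obtain ⟨ρ', hρ', hball⟩ : ∃ ρ' > 0, ball z ρ' ⊆ D := by
    obtain ⟨ρ', hρ', h⟩ := Metric.mem_nhds_iff.mp (mem_interior_iff_mem_nhds.mp hz)
    exact ⟨ρ', hρ', h⟩
  set d : ℝ := dist z c with hd
  set s : ℝ := min 1 (ρ / (ρ' + d + 1)) with hs
  have hd0 : 0 ≤ d := dist_nonneg
  have hs0 : 0 < s := by
    apply lt_min one_pos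
    positivity
  have hs1 : s ≤ 1 := min_le_left _ _
  have hsρ : s * (ρ' + d) ≤ ρ := by
    have h1 : s ≤ ρ / (ρ' + d + 1) := min_le_right _ _
    have h2 : s * (ρ' + d) ≤ (ρ / (ρ' + d + 1)) * (ρ' + d) :=
      mul_le_mul_of_nonneg_right h1 (by positivity)
    have h3 : (ρ / (ρ' + d + 1)) * (ρ' + d) ≤ ρ := by
      rw [div_mul_eq_mul_div, div_le_iff₀ (by positivity)]
      nlinarith
    linarith
  set ctr : E2 := c + s • (z - c) with hctr
  have hsub : ball ctr (s * ρ') ⊆ closedBall c ρ ∩ D := by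
    intro w hw
    rw [mem_ball, dist_eq_norm] at hw
    have hwc : w - ctr = w - c - s • (z - c) := by rw [hctr]; abel
    constructor
    · rw [mem_closedBall, dist_eq_norm]
      have : w - c = (w - ctr) + s • (z - c) := by rw [hwc]; abel
      calc ‖w - c‖ ≤ ‖w - ctr‖ + ‖s • (z - c)‖ := by rw [this]; exact norm_add_le _ _
        _ ≤ s * ρ' + s * d := by
            have h1 : ‖s • (z - c)‖ = s * ‖z - c‖ := by
              rw [norm_smul, Real.norm_eq_abs, abs_of_pos hs0]
            have h2 : ‖z - c‖ = d := by rw [hd, dist_eq_norm]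
            rw [h1, h2]; linarith [hw.le]
        _ = s * (ρ' + d) := by ring
        _ ≤ ρ := hsρ
    · set u : E2 := c + s⁻¹ • (w - c) with hu
      have huz : u ∈ ball z ρ' := by
        rw [mem_ball, dist_eq_norm]
        have : u - z = s⁻¹ • (w - ctr) := by
          rw [hu, hctr, smul_sub, smul_sub, smul_add, smul_smul,
            inv_mul_cancel₀ hs0.ne', one_smul]
          abel
        rw [this, norm_smul, Real.norm_eq_abs, abs_of_pos (inv_pos.mpr hs0)]
        calc s⁻¹ * ‖w - ctr‖ < s⁻¹ * (s * ρ') := by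
              exact mul_lt_mul_of_pos_left hw (inv_pos.mpr hs0)
          _ = ρ' := by field_simp
      have huD : u ∈ D := hball huz
      have hwu : w = (1 - s) • c + s • u := by
        rw [hu, smul_add, smul_smul, mul_inv_cancel₀ hs0.ne', one_smul]
        rw [sub_smul, one_smul]
        abel
      rw [hwu]
      exact hDconv hc huD (by linarith) hs0.le (by ring)
  calc (0 : ENNReal) < volume (ball ctr (s * ρ')) := measure_ball_pos _ _ (by positivity)
    _ ≤ volume (closedBall c ρ ∩ D) := measure_mono hsub

lemma block_bound {Ω : Type*} [mΩ : MeasurableSpace Ω]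
    (P : Measure Ω) [IsProbabilityMeasure P]
    (ℱ : Filtration ℕ mΩ) (x : ℕ → Ω → E2)
    (hadapted : ∀ k, Measurable[ℱ k] (x k))
    (A : Set E2) (hA : MeasurableSet A) (p : ℝ) (hp0 : 0 ≤ p)
    (hcond : ∀ k, ∀ᵐ ω ∂P, p ≤ (P[(x (k + 1) ⁻¹' A).indicator (fun _ => (1 : ℝ)) | ℱ k]) ω)
    (s : ℕ) :
    ∀ n : ℕ, (P (⋂ l ∈ Finset.range n, (x (s + l + 1)) ⁻¹' Aᶜ)).toReal ≤ (1 - min p 1) ^ n := by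
  have hq0 : 0 ≤ 1 - min p 1 := by
    have : min p 1 ≤ 1 := min_le_right _ _
    linarith
  intro n
  induction n with
  | zero => simp
  | succ n ih =>
    set S : Set Ω := ⋂ l ∈ Finset.range n, (x (s + l + 1)) ⁻¹' Aᶜ with hS
    -- measurability of S w.r.t. ℱ (s + n)
    have hSmeas : MeasurableSet[ℱ (s + n)] S := by
      apply Finset.measurableSet_biInter
      intro l hl
      have hl' : l < n := Finset.mem_range.mp hl
      have h1 : MeasurableSet[ℱ (s + l + 1)] ((x (s + l + 1)) ⁻¹' Aᶜ) :=
        (hadapted (s + l + 1)) hA.compl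
      exact ℱ.mono (by omega) _ h1
    have hSmeas0 : MeasurableSet S := ℱ.le (s + n) _ hSmeas
    set E : Set Ω := (x (s + n + 1)) ⁻¹' A with hE
    have hEmeas : MeasurableSet E :=
      ((hadapted (s + n + 1)).mono (ℱ.le _) le_rfl) hA
    have hsplit : ⋂ l ∈ Finset.range (n + 1), (x (s + l + 1)) ⁻¹' Aᶜ = S ∩ Eᶜ := by
      rw [Finset.range_add_one]
      rw [Finset.set_biInter_insert]
      rw [Set.inter_comm]
      rfl
    -- the key conditional step
    have hint : Integrable (E.indicator fun _ => (1 : ℝ)) P := by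
      apply Integrable.indicator _ hEmeas
      exact integrable_const 1
    have hsi := MeasureTheory.setIntegral_condExp (ℱ.le (s + n)) hint hSmeas
    -- ∫ in S of indicator = P (S ∩ E)
    have hind : ∫ ω in S, E.indicator (fun _ => (1 : ℝ)) ω ∂P = (P (S ∩ E)).toReal := by
      rw [setIntegral_indicator hEmeas]
      rw [setIntegral_const]
      rw [Set.inter_comm]
      simp [measureReal_def]
    have hlow : (min p 1) * (P S).toReal ≤ ∫ ω in S, (P[E.indicator (fun _ => (1:ℝ))|ℱ (s+n)]) ω ∂P := by
      have hmono : ∀ᵐ ω ∂P, min p 1 ≤ (P[E.indicator (fun _ => (1:ℝ))|ℱ (s+n)]) ω := by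
        filter_upwards [hcond (s + n)] with ω hω
        exact le_trans (min_le_left _ _) hω
      calc (min p 1) * (P S).toReal = ∫ _ω in S, min p 1 ∂P := by
            rw [setIntegral_const]; simp [mul_comm, measureReal_def]
        _ ≤ _ := setIntegral_mono_ae (integrableOn_const (measure_lt_top P S).ne)
            integrable_condExp.integrableOn hmono
    have hadd : P (S ∩ E) + P (S ∩ Eᶜ) = P S := by
      have := measure_inter_add_diff (μ := P) S hEmeas
      rwa [Set.diff_eq] at this
    have hfin : ∀ T : Set Ω, P T ≠ ⊤ := fun T => (measure_lt_top P T).ne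
    have haddR : (P (S ∩ E)).toReal + (P (S ∩ Eᶜ)).toReal = (P S).toReal := by
      rw [← ENNReal.toReal_add (hfin _) (hfin _), hadd]
    have hkey : (P (S ∩ Eᶜ)).toReal ≤ (1 - min p 1) * (P S).toReal := by
      have h1 : (min p 1) * (P S).toReal ≤ (P (S ∩ E)).toReal := by
        rw [← hind, ← hsi]; exact hlow
      linarith
    rw [hsplit]
    calc (P (S ∩ Eᶜ)).toReal ≤ (1 - min p 1) * (P S).toReal := hkey
      _ ≤ (1 - min p 1) * (1 - min p 1) ^ n := by
          apply mul_le_mul_of_nonneg_left ih hq0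
      _ = (1 - min p 1) ^ (n + 1) := by ring
/-- For a continuous, symmetric, positive semidefinite kernel `K` with constant
diagonal `λ > 0` on a compact convex set `D ⊆ ℝ²` with nonempty interior, and an adapted
`D`-valued process whose one-step conditional transition probabilities dominate `ε̄·vol`,
the Gaussian-process posterior variance `V_t(x) = λ - k_t(x)ᵀ(K̄_t + σ²·I)⁻¹ k_t(x)` becomes
uniformly small with high probability: for every `ε > 0` and `δ ∈ (0,1]` there is `t₀` such
that for every `t ≥ t₀`, `P(sup_{x ∈ D} V_t(x) ≤ ε) ≥ 1 - δ`. -/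
theorem stmt_5 {Ω : Type*} [mΩ : MeasurableSpace Ω]
    (P : Measure Ω) [IsProbabilityMeasure P]
    (D : Set E2) (hDc : IsCompact D) (hDconv : Convex ℝ D) (hDint : (interior D).Nonempty)
    (K : E2 → E2 → ℝ)
    (hKcont : Continuous fun p : E2 × E2 => K p.1 p.2)
    (hKsymm : ∀ a b, K a b = K b a)
    (hKpsd : ∀ (n : ℕ) (v : Fin n → E2) (a : Fin n → ℝ),
      0 ≤ ∑ i, ∑ j, a i * a j * K (v i) (v j))
    (lam : ℝ) (hlam : 0 < lam) (hKdiag : ∀ q ∈ D, K q q = lam)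
    (ℱ : Filtration ℕ mΩ) (x : ℕ → Ω → E2)
    (hadapted : ∀ k, Measurable[ℱ k] (x k))
    (hinD : ∀ k ω, x k ω ∈ D)
    (εbar : ℝ) (hεbar : 0 < εbar)
    (htrans : ∀ (k : ℕ) (A : Set E2), MeasurableSet A → A ⊆ D →
      ∀ᵐ ω ∂P, εbar * (volume A).toReal ≤
        (P[(x (k + 1) ⁻¹' A).indicator (fun _ => (1 : ℝ)) | ℱ k]) ω)
    (σ2 : ℝ) (hσ2 : 0 < σ2) :
    ∀ ε : ℝ, 0 < ε → ∀ δ : ℝ, 0 < δ → δ ≤ 1 →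
      ∃ t₀ : ℕ, ∀ t ≥ t₀,
        1 - ENNReal.ofReal δ ≤
          P {ω | ∀ q ∈ D,
            lam - (fun i : Fin t => K (x (i.1 + 1) ω) q) ⬝ᵥ
              (((Matrix.of fun i j : Fin t => K (x (i.1 + 1) ω) (x (j.1 + 1) ω)) +
                  σ2 • (1 : Matrix (Fin t) (Fin t) ℝ))⁻¹ *ᵥ
                fun i : Fin t => K (x (i.1 + 1) ω) q) ≤ ε} := by
  intro ε hε δ hδ hδ1
  obtain ⟨z, hz⟩ := hDint
  -- choose η and m
  set η : ℝ := ε / 6 with hηdef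
  have hη0 : 0 < η := by positivity
  obtain ⟨m, hm0, hmge⟩ : ∃ m : ℕ, 0 < m ∧ σ2 / m ≤ ε / 2 := by
    obtain ⟨m, hm⟩ := exists_nat_ge (2 * σ2 / ε)
    refine ⟨m + 1, Nat.succ_pos m, ?_⟩
    rw [div_le_iff₀ (by positivity)]
    have h1 : (2 * σ2 / ε) ≤ (m : ℝ) + 1 := by
      have : (m : ℝ) ≤ (m : ℝ) + 1 := by linarith
      linarith
    have h2 := mul_le_mul_of_nonneg_right h1 (le_of_lt (half_pos hε))
    have h3 : (2 * σ2 / ε) * (ε / 2) = σ2 := by field_simp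
    rw [h3] at h2
    push_cast
    linarith
  -- uniform continuity radius
  obtain ⟨r0, hr0, hUC⟩ :
      ∃ r0 > 0, ∀ p ∈ D ×ˢ D, ∀ p' ∈ D ×ˢ D, dist p p' ≤ r0 →
        dist (K p.1 p.2) (K p'.1 p'.2) ≤ η := by
    have h := (hDc.prod hDc).uniformContinuousOn_of_continuous hKcont.continuousOn
    rw [Metric.uniformContinuousOn_iff_le] at h
    obtain ⟨r0, hr0, h⟩ := h η hη0
    exact ⟨r0, hr0, fun p hp p' hp' hd => h p hp p' hp' hd⟩
  have hKclose : ∀ u ∈ D, ∀ v ∈ D, dist u v ≤ r0 → |K u v - lam| ≤ η := by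
    intro u hu v hv hd
    have h := hUC (u, u) ⟨hu, hu⟩ (u, v) ⟨hu, hv⟩ ?_
    · rw [Real.dist_eq, hKdiag u hu] at h
      rwa [abs_sub_comm] at h
    · rw [Prod.dist_eq]
      simp only [dist_self]
      exact max_le (by linarith) hd
  set ρ : ℝ := r0 / 4 with hρdef
  have hρ : 0 < ρ := by positivity
  -- finite cover of D by balls of radius ρ
  obtain ⟨C, hC⟩ := hDc.elim_finite_subcover (fun c : D => Metric.ball (c : E2) ρ)
    (fun c => Metric.isOpen_ball) (fun q hq => Set.mem_iUnion.mpr ⟨⟨q, hq⟩, mem_ball_self hρ⟩)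
  have hCne : C.Nonempty := by
    have hzD : z ∈ D := interior_subset hz
    obtain ⟨c, hc⟩ := Set.mem_iUnion₂.mp (hC hzD)
    exact ⟨c, hc.1⟩
  set A : D → Set E2 := fun c => Metric.closedBall (c : E2) ρ ∩ D with hAdef
  have hAmeas : ∀ c : D, MeasurableSet (A c) := fun c =>
    measurableSet_closedBall.inter hDc.isClosed.measurableSet
  have hAD : ∀ c : D, A c ⊆ D := fun c => Set.inter_subset_right
  set p : D → ℝ := fun c => εbar * (volume (A c)).toReal with hpdef
  have hppos : ∀ c : D, 0 < p c := by
    intro c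
    apply mul_pos hεbar
    apply ENNReal.toReal_pos
    · exact (vol_pos hDconv hz c.2 hρ).ne'
    · exact ((measure_mono Set.inter_subset_left).trans_lt measure_closedBall_lt_top).ne
  set pm : ℝ := C.inf' hCne p with hpmdef
  have hpm : 0 < pm := by
    rw [hpmdef, Finset.lt_inf'_iff]
    exact fun c _ => hppos c
  set q0 : ℝ := 1 - min pm 1 with hq0def
  have hq00 : 0 ≤ q0 := by
    have : min pm 1 ≤ 1 := min_le_right _ _
    simp only [hq0def]; linarith
  have hq01 : q0 < 1 := by
    have : 0 < min pm 1 := lt_min hpm one_pos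
    simp only [hq0def]; linarith
  -- choose n
  obtain ⟨n, hn1, hnδ⟩ : ∃ n : ℕ, 1 ≤ n ∧ ((C.card * m : ℕ) : ℝ) * q0 ^ n ≤ δ := by
    have htend : Tendsto (fun n : ℕ => ((C.card * m : ℕ) : ℝ) * q0 ^ n) atTop (nhds 0) := by
      have := (tendsto_pow_atTop_nhds_zero_of_lt_one hq00 hq01).const_mul
        (((C.card * m : ℕ) : ℝ))
      simpa using this
    have hev := htend.eventually_le_const hδ
    obtain ⟨n, hn1, hn2⟩ := (hev.and (eventually_ge_atTop 1)).exists
    exact ⟨n, hn2, hn1⟩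
  refine ⟨m * n, fun t ht => ?_⟩
  -- bad event
  set Sset : D → ℕ → Set Ω := fun c b =>
    ⋂ l ∈ Finset.range n, (x (b * n + l + 1)) ⁻¹' (A c)ᶜ with hSdef
  set Bad : Set Ω := ⋃ c ∈ C, ⋃ b ∈ Finset.range m, Sset c b with hBaddef
  have hSmeas : ∀ (c : D) (b : ℕ), MeasurableSet (Sset c b) := by
    intro c b
    apply MeasurableSet.biInter (Set.to_countable _)
    intro l _
    exact ((hadapted _).mono (ℱ.le _) le_rfl) (hAmeas c).compl
  have hBadmeas : MeasurableSet Bad :=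
    Finset.measurableSet_biUnion _ fun c _ =>
      Finset.measurableSet_biUnion _ fun b _ => hSmeas c b
  -- probability of each bad block
  have hSbound : ∀ (c : D), c ∈ C → ∀ b : ℕ, P (Sset c b) ≤ ENNReal.ofReal (q0 ^ n) := by
    intro c hc b
    have hbb := block_bound P ℱ x hadapted (A c) (hAmeas c) (p c) (hppos c).le
      (fun k => htrans k (A c) (hAmeas c) (hAD c)) (b * n) n
    have hmono : (1 - min (p c) 1) ^ n ≤ q0 ^ n := by
      apply pow_le_pow_left₀
      · have h1 : min (p c) 1 ≤ 1 := min_le_right _ _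
        linarith
      · have h2 : pm ≤ p c := Finset.inf'_le p hc
        have : min pm 1 ≤ min (p c) 1 := min_le_min h2 le_rfl
        simp only [hq0def]; linarith
    calc P (Sset c b) = ENNReal.ofReal ((P (Sset c b)).toReal) :=
          (ENNReal.ofReal_toReal (measure_lt_top P _).ne).symm
      _ ≤ ENNReal.ofReal (q0 ^ n) := ENNReal.ofReal_le_ofReal (hbb.trans hmono)
  have hPBad : P Bad ≤ ENNReal.ofReal δ := by
    calc P Bad ≤ ∑ c ∈ C, P (⋃ b ∈ Finset.range m, Sset c b) := measure_biUnion_finset_le _ _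
      _ ≤ ∑ c ∈ C, ∑ b ∈ Finset.range m, P (Sset c b) :=
          Finset.sum_le_sum fun c _ => measure_biUnion_finset_le _ _
      _ ≤ ∑ c ∈ C, ∑ _b ∈ Finset.range m, ENNReal.ofReal (q0 ^ n) :=
          Finset.sum_le_sum fun c hc => Finset.sum_le_sum fun b _ => hSbound c hc b
      _ = (C.card * m : ℕ) * ENNReal.ofReal (q0 ^ n) := by
          simp [Finset.sum_const, mul_assoc]
      _ = ENNReal.ofReal (((C.card * m : ℕ) : ℝ) * q0 ^ n) := by
          rw [ENNReal.ofReal_mul (Nat.cast_nonneg _)]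
          congr 1
          rw [ENNReal.ofReal_natCast]
      _ ≤ ENNReal.ofReal δ := ENNReal.ofReal_le_ofReal hnδ
  -- the good event is contained in the target
  have hsub : Badᶜ ⊆ {ω | ∀ q ∈ D,
      lam - (fun i : Fin t => K (x (i.1 + 1) ω) q) ⬝ᵥ
        (((Matrix.of fun i j : Fin t => K (x (i.1 + 1) ω) (x (j.1 + 1) ω)) +
            σ2 • (1 : Matrix (Fin t) (Fin t) ℝ))⁻¹ *ᵥ
          fun i : Fin t => K (x (i.1 + 1) ω) q) ≤ ε} := by
    intro ω hω q hq
    obtain ⟨c, hcC, hqc⟩ : ∃ c : D, c ∈ C ∧ q ∈ Metric.ball (c : E2) ρ := by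
      obtain ⟨c, hc1, hc2⟩ := Set.mem_iUnion₂.mp (hC hq)
      exact ⟨c, hc1, hc2⟩
    -- from ω ∉ Bad: each block has a visit to A c
    have hvisit : ∀ b : Fin m, ∃ l, l < n ∧ x ((b : ℕ) * n + l + 1) ω ∈ A c := by
      intro b
      have h1 : ω ∉ Sset c b := by
        intro hωS
        exact hω (Set.mem_iUnion₂.mpr ⟨c, hcC, Set.mem_iUnion₂.mpr
          ⟨(b : ℕ), Finset.mem_range.mpr b.2, hωS⟩⟩)
      simp only [hSdef, Set.mem_iInter, Set.mem_preimage, Set.mem_compl_iff, not_forall] at h1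
      obtain ⟨l, hl, hxl⟩ := h1
      exact ⟨l, Finset.mem_range.mp hl, not_not.mp hxl⟩
    choose lf hlf1 hlf2 using hvisit
    have hlt : ∀ b : Fin m, (b : ℕ) * n + lf b < t := by
      intro b
      have h1 : (b : ℕ) + 1 ≤ m := b.2
      have hlb := hlf1 b
      calc (b : ℕ) * n + lf b < (b : ℕ) * n + n := by omega
        _ = ((b : ℕ) + 1) * n := by ring
        _ ≤ m * n := Nat.mul_le_mul_right n h1
        _ ≤ t := ht
    set g : Fin m → Fin t := fun b => ⟨(b : ℕ) * n + lf b, hlt b⟩ with hgdef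
    have hginj : Function.Injective g := by
      intro b b' hbb
      have h1 : (b : ℕ) * n + lf b = (b' : ℕ) * n + lf b' := congrArg Fin.val hbb
      have hb := hlf1 b
      have hb' := hlf1 b'
      have : (b : ℕ) = (b' : ℕ) := by
        have e1 : ((b : ℕ) * n + lf b) / n = (b : ℕ) := by
          rw [Nat.mul_comm, Nat.mul_add_div (by omega), Nat.div_eq_of_lt hb, Nat.add_zero]
        have e2 : ((b' : ℕ) * n + lf b') / n = (b' : ℕ) := by
          rw [Nat.mul_comm, Nat.mul_add_div (by omega), Nat.div_eq_of_lt hb', Nat.add_zero]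
        rw [← e1, ← e2, h1]
      exact Fin.ext this
    set y : Fin t → E2 := fun i => x (i.1 + 1) ω with hydef
    have hyA : ∀ b : Fin m, y (g b) ∈ A c := fun b => hlf2 b
    have hyball : ∀ b : Fin m, dist (y (g b)) (c : E2) ≤ ρ := fun b => (hyA b).1
    have hyD : ∀ i : Fin t, y i ∈ D := fun i => hinD _ ω
    -- apply var_bound
    have hGsymm : (Matrix.of fun i j : Fin t => K (y i) (y j))ᵀ
        = Matrix.of fun i j : Fin t => K (y i) (y j) := by
      ext i j
      simp only [Matrix.transpose_apply, Matrix.of_apply]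
      exact hKsymm (y j) (y i)
    have hGquad : ∀ a : Fin t → ℝ,
        0 ≤ a ⬝ᵥ ((Matrix.of fun i j : Fin t => K (y i) (y j)) *ᵥ a) := by
      intro a
      have h1 : a ⬝ᵥ ((Matrix.of fun i j : Fin t => K (y i) (y j)) *ᵥ a)
          = ∑ i, ∑ j, a i * a j * K (y i) (y j) := by
        simp only [dotProduct, Matrix.mulVec, Matrix.of_apply]
        apply Finset.sum_congr rfl
        intro i _
        rw [Finset.mul_sum]
        apply Finset.sum_congr rfl
        intro j _
        show a i * (K (y i) (y j) * a j) = a i * a j * K (y i) (y j)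
        ring
      rw [h1]
      exact hKpsd t y a
    have hnear : ∀ b b' : Fin m, K (y (g b)) (y (g b')) ≤ lam + η := by
      intro b b'
      have hd : dist (y (g b)) (y (g b')) ≤ r0 := by
        calc dist (y (g b)) (y (g b')) ≤ dist (y (g b)) (c : E2) + dist (c : E2) (y (g b')) :=
              dist_triangle _ _ _
          _ ≤ ρ + ρ := add_le_add (hyball b) (by rw [dist_comm]; exact hyball b')
          _ ≤ r0 := by rw [hρdef]; linarith
      have := hKclose _ (hyD (g b)) _ (hyD (g b')) hd
      have := abs_le.mp this
      linarith [this.2]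
    have hnearq : ∀ b : Fin m, lam - η ≤ K (y (g b)) q := by
      intro b
      have hd : dist (y (g b)) q ≤ r0 := by
        calc dist (y (g b)) q ≤ dist (y (g b)) (c : E2) + dist (c : E2) q := dist_triangle _ _ _
          _ ≤ ρ + ρ := add_le_add (hyball b) (by rw [dist_comm]; exact (mem_ball.mp hqc).le)
          _ ≤ r0 := by rw [hρdef]; linarith
      have := abs_le.mp (hKclose _ (hyD (g b)) _ hq hd)
      linarith [this.1]
    have hvb := var_bound hm0 y q K lam σ2 η hσ2 hη0.le hGsymm hGquad g hginj hnear hnearq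
    calc lam - (fun i : Fin t => K (x (i.1 + 1) ω) q) ⬝ᵥ
          (((Matrix.of fun i j : Fin t => K (x (i.1 + 1) ω) (x (j.1 + 1) ω)) +
              σ2 • (1 : Matrix (Fin t) (Fin t) ℝ))⁻¹ *ᵥ
            fun i : Fin t => K (x (i.1 + 1) ω) q)
        ≤ 3 * η + σ2 / m := hvb
      _ ≤ ε := by rw [hηdef]; linarith
  -- conclude
  calc 1 - ENNReal.ofReal δ ≤ 1 - P Bad := tsub_le_tsub_left hPBad 1
    _ = P Badᶜ := by
        rw [measure_compl hBadmeas (measure_lt_top P _).ne, measure_univ]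
    _ ≤ P _ := measure_mono hsub
end

section
/- Let X ⊂ ℝ² be a compact convex polygonal region and let μ : X → ℝ be a continuous strictly positive density. Let x = (x_1, …, x_N) ∈ Xᴺ be a tuple of distinct points, let V_i(x) = {q ∈ X : ‖q − x_i‖ ≤ ‖q − x_j‖ for all j} be the Voronoi cells, let c_i(V_i(x)) = (∫_{V_i(x)} μ(q) dq)⁻¹ ∫_{V_i(x)} q μ(q) dq be the centroids, and define the coverage function H(x; μ) = Σ_{i=1}^{N} ∫_{V_i(x)} ‖q − c_i(V_i(x))‖² μ(q) dq. If the Lloyd update x′ = (c_1(V_1(x)), …, c_N(V_N(x))) also consists of distinct points, then H(x′; μ) ≤ H(x; μ). -/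
open MeasureTheory

lemma bisector_null (a b : E2) (h : a ≠ b) :
    volume {q : E2 | ‖q - a‖ = ‖q - b‖} = 0 := by
  have hset : {q : E2 | ‖q - a‖ = ‖q - b‖} = (AffineSubspace.perpBisector a b : Set E2) := by
    ext q
    simp [AffineSubspace.mem_perpBisector_iff_dist_eq, dist_eq_norm]
  rw [hset]
  exact Measure.addHaar_affineSubspace volume _
    (fun ht => h (AffineSubspace.perpBisector_eq_top.mp ht))

lemma cont_inf' {ι : Type*} (s : Finset ι) (hs : s.Nonempty) (f : ι → E2 → ℝ)
    (hf : ∀ i, Continuous (f i)) :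
    Continuous fun q => s.inf' hs fun i => f i q := by
  induction hs using Finset.Nonempty.cons_induction with
  | singleton a => simpa using hf a
  | cons a t ha ht ih =>
    exact ((hf a).min ih).congr fun q => by rw [Finset.inf'_cons]

lemma sum_setIntegral_eq {N : ℕ} (D : Set E2) (A : Fin N → Set E2)
    (hmeas : ∀ i, MeasurableSet (A i))
    (hdisj : ∀ i j, i ≠ j → volume (A i ∩ A j) = 0)
    (hunion : (⋃ i, A i) = D)
    (f : E2 → ℝ) (hf : IntegrableOn f D) :
    ∑ i, ∫ q in A i, f q = ∫ q in D, f q := by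
  rw [← hunion,
    integral_iUnion_ae (fun i => (hmeas i).nullMeasurableSet)
      (fun i j hij => hdisj i j hij) (hunion ▸ hf)]
  exact (tsum_fintype _).symm

lemma centroid_min (S : Set E2) (hS : MeasurableSet S)
    (μ : E2 → ℝ) (hμ0 : ∀ q ∈ S, 0 ≤ μ q)
    (hμint : IntegrableOn μ S)
    (hqint : IntegrableOn (fun q => μ q • q) S)
    (hn2int : ∀ p : E2, IntegrableOn (fun q => ‖q - p‖ ^ 2 * μ q) S)
    (p : E2) :
    ∫ q in S, ‖q - ((∫ q in S, μ q)⁻¹ • ∫ q in S, μ q • q)‖ ^ 2 * μ q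
      ≤ ∫ q in S, ‖q - p‖ ^ 2 * μ q := by
  set m := ∫ q in S, μ q with hm
  set b := ∫ q in S, μ q • q with hb
  set cS : E2 := m⁻¹ • b with hcS
  have hμ0' : 0 ≤ᵐ[volume.restrict S] μ :=
    (ae_restrict_iff' hS).2 (Filter.Eventually.of_forall hμ0)
  by_cases hm0 : m = 0
  · -- degenerate case : the density vanishes a.e. on S
    have hae : μ =ᵐ[volume.restrict S] 0 :=
      (integral_eq_zero_iff_of_nonneg_ae hμ0' hμint).1 (by rw [← hm]; exact hm0)
    have hzero : ∀ p' : E2, ∫ q in S, ‖q - p'‖ ^ 2 * μ q = 0 := by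
      intro p'
      have : (fun q => ‖q - p'‖ ^ 2 * μ q) =ᵐ[volume.restrict S] 0 :=
        hae.mono fun q hq => by simp [hq]
      rw [integral_congr_ae this]; simp
    rw [hzero, hzero]
  · have hmpos : 0 < m := lt_of_le_of_ne (setIntegral_nonneg hS hμ0) (Ne.symm hm0)
    set v : E2 := cS - p with hv
    have hbm : b = m • cS := by
      rw [hcS, smul_smul, mul_inv_cancel₀ hm0, one_smul]
    -- pointwise expansion
    have key : ∀ q : E2, ‖q - p‖ ^ 2 * μ q
        = ‖q - cS‖ ^ 2 * μ q
          + (2 * inner ℝ v (μ q • q) + (‖v‖ ^ 2 - 2 * inner ℝ v cS) * μ q) := by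
      intro q
      have h1 : q - p = (q - cS) + v := by rw [hv]; abel
      have e1 : (inner ℝ (q - cS) v : ℝ) = inner ℝ v q - inner ℝ v cS := by
        rw [← inner_sub_right]; exact real_inner_comm _ _
      have e2 : (inner ℝ v (μ q • q) : ℝ) = μ q * inner ℝ v q := real_inner_smul_right v q (μ q)
      rw [h1, norm_add_sq_real, e1, e2]
      ring
    have hinner_int : IntegrableOn (fun q => (inner ℝ v (μ q • q) : ℝ)) S :=
      hqint.const_inner v
    have hg_int : IntegrableOn
        (fun q => 2 * inner ℝ v (μ q • q) + (‖v‖ ^ 2 - 2 * inner ℝ v cS) * μ q) S :=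
      (hinner_int.const_mul 2).add (hμint.const_mul _)
    have hsplit : ∫ q in S, ‖q - p‖ ^ 2 * μ q
        = (∫ q in S, ‖q - cS‖ ^ 2 * μ q)
          + ∫ q in S, (2 * inner ℝ v (μ q • q) + (‖v‖ ^ 2 - 2 * inner ℝ v cS) * μ q) := by
      rw [← integral_add (hn2int cS) hg_int]
      exact integral_congr_ae (Filter.Eventually.of_forall fun q => key q)
    have hgval : ∫ q in S, (2 * inner ℝ v (μ q • q) + (‖v‖ ^ 2 - 2 * inner ℝ v cS) * μ q)
        = m * ‖v‖ ^ 2 := by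
      rw [integral_add (hinner_int.const_mul 2) (hμint.const_mul _),
        integral_const_mul, integral_const_mul, integral_inner hqint, ← hb, ← hm, hbm,
        real_inner_smul_right]
      ring
    have : 0 ≤ m * ‖v‖ ^ 2 := mul_nonneg hmpos.le (by positivity)
    rw [hsplit, hgval]
    linarith

/-- One step of Lloyd's "centering and partitioning" iteration does not increase
the coverage cost: for a compact convex (polygonal) region `D ⊆ ℝ²` with nonempty interior,
a continuous strictly positive density `μ` on `D`, distinct generators `x`, Voronoi cells
`V_i(z)`, centroids `c_i(V_i(z))` and coverage cost
`H(z) = Σ_i ∫_{V_i(z)} ‖q − c_i(V_i(z))‖² μ(q) dq`, if the Lloyd update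
`x′ = (c_1(V_1(x)), …, c_N(V_N(x)))` also consists of distinct points then `H(x′) ≤ H(x)`. -/
theorem stmt_10 (D : Set E2) (hDc : IsCompact D) (hDconv : Convex ℝ D)
    (hDint : (interior D).Nonempty)
    (μ : E2 → ℝ) (hμcont : ContinuousOn μ D) (hμpos : ∀ q ∈ D, 0 < μ q)
    (N : ℕ) (hN : 0 < N)
    (V : (Fin N → E2) → Fin N → Set E2)
    (hV : ∀ z i, V z i = {q ∈ D | ∀ j, ‖q - z i‖ ≤ ‖q - z j‖})
    (c : (Fin N → E2) → Fin N → E2)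
    (hc : ∀ z i, c z i = (∫ q in V z i, μ q)⁻¹ • ∫ q in V z i, μ q • q)
    (Hcov : (Fin N → E2) → ℝ)
    (hHcov : ∀ z, Hcov z = ∑ i, ∫ q in V z i, ‖q - c z i‖ ^ 2 * μ q)
    (x : Fin N → E2) (hxD : ∀ i, x i ∈ D) (hxinj : Function.Injective x)
    (hLloydinj : Function.Injective (c x)) :
    Hcov (c x) ≤ Hcov x := by
  set y : Fin N → E2 := c x with hy
  -- basic properties of the cells
  have hVsub : ∀ z i, V z i ⊆ D := by
    intro z i q hq
    rw [hV] at hq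
    exact hq.1
  have hVmeas : ∀ z i, MeasurableSet (V z i) := by
    intro z i
    have : V z i = D ∩ ⋂ j, {q : E2 | ‖q - z i‖ ≤ ‖q - z j‖} := by
      rw [hV]; ext q; simp only [Set.mem_setOf_eq, Set.mem_inter_iff, Set.mem_iInter]
    rw [this]
    exact (hDc.isClosed.inter (isClosed_iInter fun j =>
      isClosed_le ((continuous_id.sub continuous_const).norm)
        ((continuous_id.sub continuous_const).norm))).measurableSet
  have hnull : ∀ z : Fin N → E2, Function.Injective z → ∀ i j, i ≠ j →
      volume (V z i ∩ V z j) = 0 := by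
    intro z hz i j hij
    refine measure_mono_null ?_ (bisector_null (z i) (z j) (fun h => hij (hz h)))
    intro q hq
    have h1 := hq.1; have h2 := hq.2
    rw [hV] at h1 h2
    exact le_antisymm (h1.2 j) (h2.2 i)
  have hcover : ∀ z : Fin N → E2, (⋃ i, V z i) = D := by
    intro z
    apply Set.Subset.antisymm
    · exact Set.iUnion_subset fun i => hVsub z i
    · intro q hq
      obtain ⟨i, -, hi⟩ := Finset.exists_min_image Finset.univ (fun j => ‖q - z j‖)
        ⟨⟨0, hN⟩, Finset.mem_univ _⟩
      refine Set.mem_iUnion.2 ⟨i, ?_⟩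
      rw [hV]
      exact ⟨hq, fun j => hi j (Finset.mem_univ j)⟩
  -- integrability facts
  have hIntD : ∀ f : E2 → ℝ, ContinuousOn f D → IntegrableOn f D := fun f hf =>
    hf.integrableOn_compact hDc
  have hμD : IntegrableOn μ D := hIntD μ hμcont
  have hnorm2 : ∀ p : E2, IntegrableOn (fun q => ‖q - p‖ ^ 2 * μ q) D := fun p =>
    hIntD _ ((((continuous_id.sub continuous_const).norm.pow 2).continuousOn).mul hμcont)
  have hμqD : IntegrableOn (fun q => μ q • q) D :=
    (hμcont.smul continuousOn_id).integrableOn_compact hDc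
  -- the "min distance squared times density" function
  have hne : (Finset.univ : Finset (Fin N)).Nonempty := ⟨⟨0, hN⟩, Finset.mem_univ _⟩
  set mfun : E2 → ℝ :=
    fun q => (Finset.univ.inf' hne fun j => ‖q - y j‖) ^ 2 * μ q with hmfun
  have hmcont : Continuous fun q : E2 => Finset.univ.inf' hne fun j => ‖q - y j‖ :=
    cont_inf' Finset.univ hne (fun j q => ‖q - y j‖)
      (fun j => (continuous_id.sub continuous_const).norm)
  have hmfunD : IntegrableOn mfun D :=
    hIntD _ (((hmcont.pow 2).continuousOn).mul hμcont)
  have hmf_eq : ∀ i, ∀ q ∈ V y i, mfun q = ‖q - y i‖ ^ 2 * μ q := by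
    intro i q hq
    rw [hV] at hq
    have h1 : (Finset.univ.inf' hne fun j => ‖q - y j‖) = ‖q - y i‖ :=
      le_antisymm (Finset.inf'_le _ (Finset.mem_univ i))
        (Finset.le_inf' _ _ fun j _ => hq.2 j)
    have h2 : mfun q = (Finset.univ.inf' hne fun j => ‖q - y j‖) ^ 2 * μ q := rfl
    rw [h2, h1]
  have hmf_le : ∀ i : Fin N, ∀ q ∈ V x i, mfun q ≤ ‖q - y i‖ ^ 2 * μ q := by
    intro i q hq
    have hqD : q ∈ D := hVsub x i hq
    have h0 : 0 ≤ Finset.univ.inf' hne fun j => ‖q - y j‖ :=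
      Finset.le_inf' hne _ fun j _ => norm_nonneg _
    have h1 : (Finset.univ.inf' hne fun j => ‖q - y j‖) ^ 2 ≤ ‖q - y i‖ ^ 2 :=
      pow_le_pow_left₀ h0 (Finset.inf'_le _ (Finset.mem_univ i)) 2
    exact mul_le_mul_of_nonneg_right h1 (hμpos q hqD).le
  -- main chain of (in)equalities
  rw [hHcov, hHcov]
  calc ∑ i, ∫ q in V y i, ‖q - c y i‖ ^ 2 * μ q
      ≤ ∑ i, ∫ q in V y i, ‖q - y i‖ ^ 2 * μ q := by
        refine Finset.sum_le_sum fun i _ => ?_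
        have h := centroid_min (V y i) (hVmeas y i) μ
          (fun q hq => (hμpos q (hVsub y i hq)).le)
          (hμD.mono_set (hVsub y i)) (hμqD.mono_set (hVsub y i))
          (fun p => (hnorm2 p).mono_set (hVsub y i)) (y i)
        rwa [← hc y i] at h
    _ = ∑ i, ∫ q in V y i, mfun q := by
        refine Finset.sum_congr rfl fun i _ => ?_
        exact (setIntegral_congr_fun (hVmeas y i) fun q hq => (hmf_eq i q hq)).symm
    _ = ∫ q in D, mfun q :=
        sum_setIntegral_eq D (V y) (hVmeas y) (hnull y hLloydinj) (hcover y) mfun hmfunD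
    _ = ∑ i, ∫ q in V x i, mfun q :=
        (sum_setIntegral_eq D (V x) (hVmeas x) (hnull x hxinj) (hcover x) mfun hmfunD).symm
    _ ≤ ∑ i, ∫ q in V x i, ‖q - y i‖ ^ 2 * μ q := by
        refine Finset.sum_le_sum fun i _ => ?_
        exact setIntegral_mono_on (hmfunD.mono_set (hVsub x i))
          ((hnorm2 (y i)).mono_set (hVsub x i)) (hVmeas x i) (hmf_le i)
    _ = ∑ i, ∫ q in V x i, ‖q - c x i‖ ^ 2 * μ q := rfl
end
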